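/- A finite word W is rich if and only if for each non-empty palindromic factor u of W, every complete return to u in W is a palindrome. -/

import Mathlib

open List

variable {α : Type*} [DecidableEq α]

/-- The set of factors (contiguous subwords) of `W`. -/
def factorFinset (W : List α) : Finset (List α) := (W.inits.flatMap List.tails).toFinset

/-- A palindrome is a word equal to its reversal. -/
def Pal (u : List α) : Prop := u.reverse = u

instance : DecidablePred (Pal : List α → Prop) :=
  fun u => inferInstanceAs (Decidable (u.reverse = u))

/-- The set of palindromic factors of `W` (including the empty word). -/
def palFactorFinset (W : List α) : Finset (List α) := (factorFinset W).filter Pal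

/-- Subword complexity: the number of distinct factors of `W` of length `n`. -/
def C (W : List α) (n : ℕ) : ℕ := ((factorFinset W).filter (fun u => u.length = n)).card

/-- Palindromic complexity: number of distinct palindromic factors of `W` of length `n`. -/
def P (W : List α) (n : ℕ) : ℕ := ((palFactorFinset W).filter (fun u => u.length = n)).card

/-- A word is rich if it has exactly `|W| + 1` distinct palindromic factors. -/
def Rich (W : List α) : Prop := (palFactorFinset W).card = W.length + 1

/-- Number of occurrences of `u` as a factor of `W`. -/
def occ (u W : List α) : ℕ := ((List.range (W.length + 1)).filter (fun i => u <+: W.drop i)).length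

/-- `Z` is a complete return to `u` in `W`: a factor of `W` with exactly two
occurrences of `u`, one as a prefix and one as a suffix. -/
def CompleteReturn (u Z W : List α) : Prop := Z <:+: W ∧ u <+: Z ∧ u <:+ Z ∧ occ u Z = 2

/-- `u` is a right special factor of `W`. -/
def RightSpecial (u W : List α) : Prop :=
  ∃ x y : α, x ≠ y ∧ (u ++ [x]) <:+: W ∧ (u ++ [y]) <:+: W

/-- `R_W`: the smallest `p` such that `W` has no right special factor of length `p`. -/
noncomputable def RW (W : List α) : ℕ := sInf {p : ℕ | ∀ u : List α, u.length = p → ¬ RightSpecial u W}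

/-- `K_W`: the length of the shortest suffix of `W` occurring exactly once in `W`. -/
noncomputable def KW (W : List α) : ℕ := sInf {k : ℕ | ∃ u : List α, u <:+ W ∧ u.length = k ∧ occ u W = 1}

/-- A word is trapezoidal if `|W| = R_W + K_W`. -/
def Trapezoidal (W : List α) : Prop := W.length = RW W + KW W

/-- The minimal period of `W`. -/
noncomputable def minPeriod (W : List α) : ℕ :=
  sInf {q : ℕ | 0 < q ∧ ∀ i : ℕ, i + q < W.length → W[i]? = W[i + q]?}

/-- A binary word is balanced if the number of occurrences of a letter in two
factors of equal length differ by at most 1. -/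
def BalancedWord (W : List Bool) : Prop :=
  ∀ u v : List Bool, u <:+: W → v <:+: W → u.length = v.length →
    u.count true ≤ v.count true + 1

set_option linter.unusedSectionVars false

namespace RichAux


/-- occurrence at position `i` characterized by a decomposition. -/
lemma occ_at_iff {u W : List α} {i : ℕ} (hi : i ≤ W.length) :
    u <+: W.drop i ↔ ∃ s t : List α, s.length = i ∧ s ++ u ++ t = W := by
  constructor
  · rintro ⟨t, ht⟩
    refine ⟨W.take i, t, by simp [hi], ?_⟩
    rw [List.append_assoc, ht, List.take_append_drop]
  · rintro ⟨s, t, hs, rfl⟩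
    rw [List.append_assoc, ← hs, List.drop_left]
    exact ⟨t, rfl⟩

lemma pocc_length {u W : List α} {i : ℕ} (hu : u ≠ []) (h : u <+: W.drop i) :
    i + u.length ≤ W.length := by
  have h1 : u.length ≤ W.length - i := by simpa using h.length_le
  have h2 : 1 ≤ u.length := List.length_pos_iff.2 hu
  omega

lemma infix_iff_occ {u W : List α} :
    u <:+: W ↔ ∃ i, i + u.length ≤ W.length ∧ u <+: W.drop i := by
  constructor
  · rintro ⟨s, t, rfl⟩
    refine ⟨s.length, by simp, (occ_at_iff (by simp)).2 ⟨s, t, rfl, rfl⟩⟩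
  · rintro ⟨i, hle, h⟩
    obtain ⟨s, t, hs, hw⟩ := (occ_at_iff (by omega)).1 h
    exact ⟨s, t, hw⟩

lemma occ_eq_card (u W : List α) :
    occ u W = ((Finset.range (W.length + 1)).filter (fun i => u <+: W.drop i)).card := by
  rw [occ, ← List.toFinset_card_of_nodup (List.filter_sublist.nodup List.nodup_range)]
  congr 1
  ext i
  simp only [List.mem_toFinset, List.mem_filter, List.mem_range, Finset.mem_filter,
    Finset.mem_range, decide_eq_true_eq]

lemma occ_at_reverse {u W : List α} {i : ℕ} (h : u <+: W.drop i) (hi : i + u.length ≤ W.length) :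
    u.reverse <+: W.reverse.drop (W.length - u.length - i) := by
  obtain ⟨s, t, hs, hw⟩ := (occ_at_iff (by omega)).1 h
  have hrev : t.reverse ++ u.reverse ++ s.reverse = W.reverse := by
    rw [← hw]; simp [List.reverse_append]
  have hlen : s.length + u.length + t.length = W.length := by
    have h2 := congrArg List.length hw; simp at h2; omega
  refine (occ_at_iff ?_).2 ⟨t.reverse, s.reverse, by simp; omega, hrev⟩
  simp; omega

lemma occ_le_reverse (u W : List α) : occ u W ≤ occ u.reverse W.reverse := by
  rw [occ_eq_card, occ_eq_card]
  apply Finset.card_le_card_of_injOn (fun i => W.length - u.length - i)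
  · intro i hi
    simp only [Finset.mem_coe, Finset.mem_filter, Finset.mem_range] at hi ⊢
    have hb : i + u.length ≤ W.length := by
      by_cases hu : u = []
      · subst hu; simp; omega
      · exact pocc_length hu hi.2
    refine ⟨by simp; omega, ?_⟩
    simpa [List.length_reverse] using occ_at_reverse hi.2 hb
  · intro i hi j hj hij
    simp only [Finset.coe_filter, Set.mem_setOf_eq, Finset.mem_range] at hi hj
    have hbi : i + u.length ≤ W.length := by
      by_cases hu : u = []
      · subst hu; simp; omega
      · exact pocc_length hu hi.2
    have hbj : j + u.length ≤ W.length := by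
      by_cases hu : u = []
      · subst hu; simp; omega
      · exact pocc_length hu hj.2
    simp only at hij
    omega

lemma occ_reverse (u W : List α) : occ u.reverse W.reverse = occ u W := by
  refine le_antisymm ?_ (occ_le_reverse u W)
  have := occ_le_reverse u.reverse W.reverse
  simpa using this



lemma suffix_drop {u Z : List α} (h : u <:+ Z) : Z.drop (Z.length - u.length) = u :=
  (List.suffix_iff_eq_drop.1 h).symm

lemma suffix_of_suffix_le {u Z P : List α} (h1 : u <:+ P) (h2 : Z <:+ P)
    (h : u.length ≤ Z.length) : u <:+ Z := by
  have l1 : u.length ≤ P.length := h1.length_le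
  have l2 : Z.length ≤ P.length := h2.length_le
  have e1 := suffix_drop h1
  have e2 := suffix_drop h2
  have key : Z.drop (Z.length - u.length) = u := by
    conv_lhs => rw [← e2]
    rw [List.drop_drop]
    have hl : (List.drop (P.length - Z.length) P).length = Z.length := by rw [e2]
    rw [hl]
    have harith : P.length - Z.length + (Z.length - u.length) = P.length - u.length := by omega
    rw [harith, e1]
  rw [← key]
  exact List.drop_suffix _ _

lemma suffix_eq_of_length_eq {u v P : List α} (h1 : u <:+ P) (h2 : v <:+ P)
    (h : u.length = v.length) : u = v := by
  rw [← suffix_drop h1, ← suffix_drop h2, h]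

lemma pal_suffix_prefix {u Q : List α} (hu : Pal u) (hQ : Pal Q) (h : u <:+ Q) : u <+: Q := by
  have := List.reverse_prefix.2 h
  rwa [hu, hQ] at this

lemma pal_prefix_suffix {u Q : List α} (hu : Pal u) (hQ : Pal Q) (h : u <+: Q) : u <:+ Q := by
  have := List.reverse_suffix.2 h
  rwa [hu, hQ] at this

lemma occ_two_len {u Z : List α} (hu : u ≠ []) (h2 : occ u Z = 2) : u.length < Z.length := by
  by_contra hc
  push_neg at hc
  have hsub : ((Finset.range (Z.length + 1)).filter (fun i => u <+: Z.drop i)) ⊆ {0} := by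
    intro i hi
    simp only [Finset.mem_filter, Finset.mem_range] at hi
    have := pocc_length hu hi.2
    have h1 : 1 ≤ u.length := List.length_pos_iff.2 hu
    simp only [Finset.mem_singleton]
    omega
  have := Finset.card_le_card hsub
  rw [← occ_eq_card, h2] at this
  simp at this

lemma occ_two_positions {u Z : List α} (hu : u ≠ []) (hp : u <+: Z) (hs : u <:+ Z)
    (h2 : occ u Z = 2) : ∀ i, u <+: Z.drop i → i = 0 ∨ i = Z.length - u.length := by
  have hlen := occ_two_len hu h2
  set F := ((Finset.range (Z.length + 1)).filter (fun i => u <+: Z.drop i)) with hF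
  have hsub : ({0, Z.length - u.length} : Finset ℕ) ⊆ F := by
    intro i hi
    simp only [Finset.mem_insert, Finset.mem_singleton] at hi
    rcases hi with rfl | rfl
    · simp only [hF, Finset.mem_filter, Finset.mem_range]
      exact ⟨by omega, by simpa using hp⟩
    · simp only [hF, Finset.mem_filter, Finset.mem_range]
      exact ⟨by omega, by rw [suffix_drop hs]⟩
  have hcard : ({0, Z.length - u.length} : Finset ℕ).card = 2 := by
    rw [Finset.card_insert_of_notMem (by simp; omega), Finset.card_singleton]
  have heq : ({0, Z.length - u.length} : Finset ℕ) = F :=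
    Finset.eq_of_subset_of_card_le hsub (by rw [hcard, hF, ← occ_eq_card, h2])
  intro i hi
  have hiF : i ∈ F := by
    simp only [hF, Finset.mem_filter, Finset.mem_range]
    have := pocc_length hu hi
    exact ⟨by omega, hi⟩
  rw [← heq] at hiF
  simpa using hiF

lemma occ_one_positions {u P : List α} (hu : u ≠ []) (hs : u <:+ P)
    (h1 : occ u P = 1) : ∀ i, u <+: P.drop i → i = P.length - u.length := by
  set F := ((Finset.range (P.length + 1)).filter (fun i => u <+: P.drop i)) with hF
  have hsub : ({P.length - u.length} : Finset ℕ) ⊆ F := by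
    intro i hi
    simp only [Finset.mem_singleton] at hi
    subst hi
    simp only [hF, Finset.mem_filter, Finset.mem_range]
    exact ⟨by omega, by rw [suffix_drop hs]⟩
  have heq : ({P.length - u.length} : Finset ℕ) = F :=
    Finset.eq_of_subset_of_card_le hsub (by rw [Finset.card_singleton, hF, ← occ_eq_card, h1])
  intro i hi
  have hiF : i ∈ F := by
    simp only [hF, Finset.mem_filter, Finset.mem_range]
    have := pocc_length hu hi
    exact ⟨by omega, hi⟩
  rw [← heq] at hiF
  simpa using hiF

lemma occ_two_intro {u Z : List α} (hu : u ≠ []) (hp : u <+: Z) (hs : u <:+ Z)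
    (hlen : u.length < Z.length)
    (hpos : ∀ i, u <+: Z.drop i → i = 0 ∨ i = Z.length - u.length) : occ u Z = 2 := by
  rw [occ_eq_card]
  have : ((Finset.range (Z.length + 1)).filter (fun i => u <+: Z.drop i))
      = {0, Z.length - u.length} := by
    ext i
    simp only [Finset.mem_filter, Finset.mem_range, Finset.mem_insert, Finset.mem_singleton]
    constructor
    · rintro ⟨-, h⟩; exact hpos i h
    · rintro (rfl | rfl)
      · exact ⟨by omega, by simpa using hp⟩
      · exact ⟨by omega, by rw [suffix_drop hs]⟩
  rw [this, Finset.card_insert_of_notMem (by simp; omega), Finset.card_singleton]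

lemma occ_one_intro {u P : List α} (hs : u <:+ P)
    (hpos : ∀ i, u <+: P.drop i → i = P.length - u.length) : occ u P = 1 := by
  rw [occ_eq_card]
  have : ((Finset.range (P.length + 1)).filter (fun i => u <+: P.drop i))
      = {P.length - u.length} := by
    ext i
    simp only [Finset.mem_filter, Finset.mem_range, Finset.mem_singleton]
    constructor
    · rintro ⟨-, h⟩; exact hpos i h
    · rintro rfl
      exact ⟨by omega, by rw [suffix_drop hs]⟩
  rw [this, Finset.card_singleton]

lemma occ_two_ge {u W : List α} (hu : u ≠ []) {i j : ℕ} (hij : i ≠ j)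
    (hi : u <+: W.drop i) (hj : u <+: W.drop j) : 2 ≤ occ u W := by
  rw [occ_eq_card]
  have hsub : ({i, j} : Finset ℕ) ⊆ (Finset.range (W.length + 1)).filter (fun k => u <+: W.drop k) := by
    intro k hk
    simp only [Finset.mem_insert, Finset.mem_singleton] at hk
    rcases hk with rfl | rfl
    · exact Finset.mem_filter.2 ⟨Finset.mem_range.2 (by have := pocc_length hu hi; omega), hi⟩
    · exact Finset.mem_filter.2 ⟨Finset.mem_range.2 (by have := pocc_length hu hj; omega), hj⟩
  calc 2 = ({i, j} : Finset ℕ).card := by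
        rw [Finset.card_insert_of_notMem (by simpa using hij), Finset.card_singleton]
    _ ≤ _ := Finset.card_le_card hsub

lemma pal_of_length_le_one {l : List α} (h : l.length ≤ 1) : Pal l := by
  interval_cases h' : l.length
  · rw [List.length_eq_zero_iff] at h'; subst h'; rfl
  · rw [List.length_eq_one_iff] at h'; obtain ⟨a, rfl⟩ := h'; rfl

/-- existence of a longest palindromic suffix -/
lemma exists_maxpal (P : List α) (hP : P ≠ []) :
    ∃ Q : List α, Q ≠ [] ∧ Q <:+ P ∧ Pal Q ∧
      ∀ R : List α, R <:+ P → Pal R → R.length ≤ Q.length := by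
  have hlen : 1 ≤ P.length := List.length_pos_iff.2 hP
  set p : ℕ → Prop := fun k => Pal (P.drop (P.length - k)) with hp
  have hp1 : p 1 := by
    apply pal_of_length_le_one
    simp only [List.length_drop]
    omega
  set k := Nat.findGreatest p P.length with hk
  have hk1 : 1 ≤ k := Nat.le_findGreatest hlen hp1
  have hkP : k ≤ P.length := Nat.findGreatest_le _
  have hkp : p k := Nat.findGreatest_spec hlen hp1
  refine ⟨P.drop (P.length - k), ?_, List.drop_suffix _ _, hkp, ?_⟩
  · intro hc
    have := congrArg List.length hc
    simp only [List.length_drop, List.length_nil] at this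
    omega
  · intro R hR hRpal
    have hRlen : R.length ≤ P.length := hR.length_le
    have : p R.length := by
      rw [hp]
      simp only
      rw [suffix_drop hR]
      exact hRpal
    have := Nat.le_findGreatest hRlen this
    simp only [List.length_drop]
    omega



lemma mem_factorFinset {u W : List α} : u ∈ factorFinset W ↔ u <:+: W := by
  simp only [factorFinset, List.mem_toFinset, List.mem_flatMap, List.mem_inits, List.mem_tails]
  constructor
  · rintro ⟨p, hp, hu⟩
    exact hu.isInfix.trans hp.isInfix
  · rintro ⟨s, t, rfl⟩
    exact ⟨s ++ u, ⟨t, by simp⟩, ⟨s, rfl⟩⟩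

lemma mem_palFactorFinset {u W : List α} :
    u ∈ palFactorFinset W ↔ u <:+: W ∧ Pal u := by
  simp only [palFactorFinset, Finset.mem_filter, mem_factorFinset]

lemma palFactorFinset_mono {W₁ W₂ : List α} (h : W₁ <:+: W₂) :
    palFactorFinset W₁ ⊆ palFactorFinset W₂ := by
  intro u hu
  rw [mem_palFactorFinset] at hu ⊢
  exact ⟨hu.1.trans h, hu.2⟩

lemma nil_mem_palFactorFinset (W : List α) : [] ∈ palFactorFinset W :=
  mem_palFactorFinset.2 ⟨List.nil_infix, rfl⟩

lemma palFactorFinset_nil : palFactorFinset ([] : List α) = {[]} := by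
  ext u
  simp only [mem_palFactorFinset, Finset.mem_singleton]
  constructor
  · rintro ⟨h, -⟩
    exact List.infix_nil.mp h
  · rintro rfl
    exact ⟨List.nil_infix, rfl⟩

lemma infix_concat_iff {v P : List α} {a : α} :
    v <:+: P ++ [a] ↔ v <:+: P ∨ v <:+ (P ++ [a]) := by
  constructor
  · rintro ⟨s, t, h⟩
    rcases List.eq_nil_or_concat t with rfl | ⟨t', b, rfl⟩
    · right
      exact ⟨s, by simpa using h⟩
    · left
      rw [List.concat_eq_append, ← List.append_assoc] at h
      have := congrArg List.dropLast h
      rw [List.dropLast_concat, List.dropLast_concat] at this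
      exact ⟨s, t', this⟩
  · rintro (h | h)
    · exact h.trans (List.prefix_append P [a]).isInfix
    · exact h.isInfix

/-- an occurrence ending strictly before the end gives a factor of `dropLast`. -/
lemma infix_dropLast_of_occ {v P : List α} {i : ℕ} (h : v <+: P.drop i)
    (hlt : i + v.length < P.length) : v <:+: P.dropLast := by
  have hi : i ≤ P.length := by omega
  obtain ⟨t, ht⟩ := h
  have hP : P.take i ++ v ++ t = P := by
    rw [List.append_assoc, ht, List.take_append_drop]
  rcases List.eq_nil_or_concat t with rfl | ⟨t', b, rfl⟩
  · exfalso
    have := congrArg List.length hP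
    simp at this
    omega
  · rw [List.concat_eq_append, ← List.append_assoc] at hP
    have := congrArg List.dropLast hP
    rw [List.dropLast_concat] at this
    exact ⟨P.take i, t', this⟩

lemma occ_of_infix_dropLast {v P : List α} (hP : P ≠ []) (h : v <:+: P.dropLast) :
    ∃ i, i + v.length < P.length ∧ v <+: P.drop i := by
  obtain ⟨s, t, hst⟩ := h
  have hPd : P.dropLast ++ [P.getLast hP] = P := List.dropLast_append_getLast hP
  have hw : s ++ v ++ (t ++ [P.getLast hP]) = P := by
    rw [← List.append_assoc, hst, hPd]
  refine ⟨s.length, ?_, ?_⟩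
  · have := congrArg List.length hw
    simp at this
    omega
  · rw [← hw, List.append_assoc, List.drop_left]
    exact ⟨t ++ [P.getLast hP], rfl⟩



/-- `P` has a palindromic suffix that is not a factor of `P.dropLast` -/
def NewPal (P : List α) : Prop := ∃ v, v <:+ P ∧ Pal v ∧ ¬ v <:+: P.dropLast

lemma palFactorFinset_concat_subset (P : List α) (a : α) :
    palFactorFinset P ⊆ palFactorFinset (P ++ [a]) :=
  fun v hv => by
    rw [mem_palFactorFinset] at hv ⊢
    exact ⟨hv.1.trans (List.prefix_append P [a]).isInfix, hv.2⟩

lemma card_concat_le (P : List α) (a : α) :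
    (palFactorFinset (P ++ [a])).card ≤ (palFactorFinset P).card + 1 := by
  obtain ⟨Q, hQne, hQsuf, hQpal, hQmax⟩ := exists_maxpal (P ++ [a]) (by simp)
  have hsub : palFactorFinset (P ++ [a]) ⊆ insert Q (palFactorFinset P) := by
    intro v hv
    rw [mem_palFactorFinset] at hv
    obtain ⟨hvinf, hvpal⟩ := hv
    rcases infix_concat_iff.1 hvinf with h | h
    · exact Finset.mem_insert_of_mem (mem_palFactorFinset.2 ⟨h, hvpal⟩)
    · -- v is a palindromic suffix of P ++ [a]
      have hlen : v.length ≤ Q.length := hQmax v h hvpal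
      rcases eq_or_lt_of_le hlen with heq | hlt
      · have : v = Q := suffix_eq_of_length_eq h hQsuf heq
        exact this ▸ Finset.mem_insert_self _ _
      · -- strictly shorter: v occurs earlier, so it is a factor of P
        apply Finset.mem_insert_of_mem
        rw [mem_palFactorFinset]
        refine ⟨?_, hvpal⟩
        have hvQ : v <:+ Q := suffix_of_suffix_le h hQsuf hlen
        have hvQp : v <+: Q := pal_suffix_prefix hvpal hQpal hvQ
        have hocc : v <+: (P ++ [a]).drop ((P ++ [a]).length - Q.length) := by
          rw [suffix_drop hQsuf]; exact hvQp
        have hQle : Q.length ≤ (P ++ [a]).length := hQsuf.length_le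
        have := infix_dropLast_of_occ hocc (by simp at hQle ⊢; omega)
        rwa [List.dropLast_concat] at this
  calc (palFactorFinset (P ++ [a])).card ≤ (insert Q (palFactorFinset P)).card :=
        Finset.card_le_card hsub
    _ ≤ (palFactorFinset P).card + 1 := Finset.card_insert_le _ _

lemma card_concat_eq_of_not_newPal {P : List α} {a : α} (h : ¬ NewPal (P ++ [a])) :
    palFactorFinset (P ++ [a]) = palFactorFinset P := by
  refine le_antisymm ?_ (palFactorFinset_concat_subset P a)
  intro v hv
  rw [mem_palFactorFinset] at hv ⊢
  obtain ⟨hvinf, hvpal⟩ := hv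
  rcases infix_concat_iff.1 hvinf with hcase | hcase
  · exact ⟨hcase, hvpal⟩
  · refine ⟨?_, hvpal⟩
    by_contra hc
    exact h ⟨v, hcase, hvpal, by rwa [List.dropLast_concat]⟩

lemma card_concat_ge_of_newPal {P : List α} {a : α} (h : NewPal (P ++ [a])) :
    (palFactorFinset P).card + 1 ≤ (palFactorFinset (P ++ [a])).card := by
  obtain ⟨v, hvsuf, hvpal, hvnew⟩ := h
  rw [List.dropLast_concat] at hvnew
  have hvmem : v ∈ palFactorFinset (P ++ [a]) := mem_palFactorFinset.2 ⟨hvsuf.isInfix, hvpal⟩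
  have hvnot : v ∉ palFactorFinset P := fun hc => hvnew (mem_palFactorFinset.1 hc).1
  calc (palFactorFinset P).card + 1 = (insert v (palFactorFinset P)).card :=
        (Finset.card_insert_of_notMem hvnot).symm
    _ ≤ _ := Finset.card_le_card (Finset.insert_subset hvmem (palFactorFinset_concat_subset P a))

lemma card_le (W : List α) : (palFactorFinset W).card ≤ W.length + 1 := by
  induction W using List.reverseRecOn with
  | nil => rw [palFactorFinset_nil]; simp
  | append_singleton P a ih =>
      have := card_concat_le P a
      simp only [List.length_append, List.length_singleton]
      omega

lemma card_append_le (X S : List α) :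
    (palFactorFinset (X ++ S)).card ≤ (palFactorFinset X).card + S.length := by
  induction S using List.reverseRecOn with
  | nil => simp
  | append_singleton S' b ih =>
      have h1 := card_concat_le (X ++ S') b
      rw [← List.append_assoc]
      simp only [List.length_append, List.length_singleton]
      omega

lemma rich_iff_newPal (W : List α) :
    Rich W ↔ ∀ P : List α, P <+: W → P ≠ [] → NewPal P := by
  constructor
  · intro hrich P hP hPne
    by_contra hc
    obtain ⟨P', b, rfl⟩ : ∃ P' b, P = P' ++ [b] := by
      rcases List.eq_nil_or_concat P with rfl | ⟨P', b, rfl⟩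
      · exact absurd rfl hPne
      · exact ⟨P', b, by simp⟩
    obtain ⟨S, rfl⟩ := hP
    have h1 := card_append_le (P' ++ [b]) S
    rw [card_concat_eq_of_not_newPal hc] at h1
    have h2 := card_le P'
    rw [Rich] at hrich
    simp only [List.length_append, List.length_singleton] at hrich
    omega
  · intro h
    rw [Rich]
    induction W using List.reverseRecOn with
    | nil => rw [palFactorFinset_nil]; simp
    | append_singleton P a ih =>
        have hP : ∀ P' : List α, P' <+: P → P' ≠ [] → NewPal P' := fun P' hP' =>
          h P' (hP'.trans (List.prefix_append P [a]))
        have hnew : NewPal (P ++ [a]) := h (P ++ [a]) List.prefix_rfl (by simp)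
        have h1 := card_concat_ge_of_newPal hnew
        have h2 := card_concat_le P a
        have h3 := ih hP
        simp only [List.length_append, List.length_singleton]
        omega



/-- In a word all of whose prefixes have a "new" palindromic suffix, the longest
palindromic suffix of every nonempty prefix is unioccurrent. -/
lemma newPal_unioccurrent {P : List α} (hP : P ≠ []) (h : NewPal P) :
    ∃ Q : List α, Q ≠ [] ∧ Q <:+ P ∧ Pal Q ∧
      (∀ R : List α, R <:+ P → Pal R → R.length ≤ Q.length) ∧ occ Q P = 1 := by
  obtain ⟨Q, hQne, hQsuf, hQpal, hQmax⟩ := exists_maxpal P hP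
  obtain ⟨v, hvsuf, hvpal, hvnew⟩ := h
  have hvne : v ≠ [] := by
    rintro rfl
    exact hvnew (List.nil_infix)
  have hvlen : v.length ≤ Q.length := hQmax v hvsuf hvpal
  have hvQ : v = Q := by
    rcases eq_or_lt_of_le hvlen with heq | hlt
    · exact suffix_eq_of_length_eq hvsuf hQsuf heq
    · exfalso
      have hvQs : v <:+ Q := suffix_of_suffix_le hvsuf hQsuf hvlen
      have hvQp : v <+: Q := pal_suffix_prefix hvpal hQpal hvQs
      have hocc : v <+: P.drop (P.length - Q.length) := by
        rw [suffix_drop hQsuf]; exact hvQp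
      have hQle : Q.length ≤ P.length := hQsuf.length_le
      exact hvnew (infix_dropLast_of_occ hocc (by omega))
  subst hvQ
  refine ⟨v, hvne, hvsuf, hvpal, hQmax, ?_⟩
  apply occ_one_intro hvsuf
  intro i hi
  have hb := pocc_length hvne hi
  by_contra hc
  have : i + v.length < P.length := by omega
  exact hvnew (infix_dropLast_of_occ hi this)

/-- The key induction: in a word all of whose nonempty prefixes have a unioccurrent
longest palindromic suffix, every complete return to a nonempty palindrome that is a
suffix of a prefix is a palindrome. -/
lemma main_induction (W : List α)
    (H : ∀ P : List α, P <+: W → P ≠ [] → ∃ Q : List α, Q ≠ [] ∧ Q <:+ P ∧ Pal Q ∧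
      (∀ R : List α, R <:+ P → Pal R → R.length ≤ Q.length) ∧ occ Q P = 1) :
    ∀ n (P : List α), P.length ≤ n → P <+: W → ∀ u Z : List α, u ≠ [] → Pal u →
      Z <:+ P → u <+: Z → u <:+ Z → occ u Z = 2 → Pal Z := by
  intro n
  induction n using Nat.strong_induction_on with
  | _ n ih =>
    intro P hPn hPW u Z hu hupal hZP huZp huZs hocc2
    have huZ : u.length < Z.length := occ_two_len hu hocc2
    have hune : 1 ≤ u.length := List.length_pos_iff.2 hu
    have hZne : Z ≠ [] := by
      intro hc
      subst hc
      simp at huZ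
    have hPne : P ≠ [] := by
      rintro rfl
      exact hZne (List.suffix_nil.mp hZP)
    have hZPl : Z.length ≤ P.length := hZP.length_le
    have huP : u <:+ P := huZs.trans hZP
    obtain ⟨Q, hQne, hQP, hQpal, hQmax, hQ1⟩ := H P hPW hPne
    have huQ : u.length ≤ Q.length := hQmax u huP hupal
    have hQP_len : Q.length ≤ P.length := hQP.length_le
    -- step 1 : |Z| ≤ |Q|
    have hZQ : Z.length ≤ Q.length := by
      by_contra hc
      push_neg at hc
      -- Q is a proper suffix of Z ; u is a prefix of Q, giving an occurrence inside Z
      have hQZ : Q <:+ Z := suffix_of_suffix_le hQP hZP (by omega)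
      have huQs : u <:+ Q := suffix_of_suffix_le huP hQP huQ
      have huQp : u <+: Q := pal_suffix_prefix hupal hQpal huQs
      have hoccr : u <+: Z.drop (Z.length - Q.length) := by
        rw [suffix_drop hQZ]; exact huQp
      rcases occ_two_positions hu huZp huZs hocc2 _ hoccr with h0 | hK
      · omega
      · -- Q.length = u.length, so Q = u, contradicting unioccurrence
        have : Q.length = u.length := by omega
        have hQu : Q = u := suffix_eq_of_length_eq hQP huP (by omega)
        subst hQu
        -- Q occurs in P at |P| - |Z| and at |P| - |Q|
        have ho1 : Q <+: P.drop (P.length - Z.length) := by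
          rw [suffix_drop hZP]; exact huZp
        have h1 := occ_one_positions hQne hQP hQ1 _ ho1
        omega
    rcases eq_or_lt_of_le hZQ with heq | hlt
    · -- Z = Q is a palindrome
      have : Z = Q := suffix_eq_of_length_eq hZP hQP heq
      rw [this]; exact hQpal
    · -- |Z| < |Q| : pass to the reversed return inside Q
      have hZQs : Z <:+ Q := suffix_of_suffix_le hZP hQP (by omega)
      have hZrev : Z.reverse <+: Q := by
        have := List.reverse_prefix.2 hZQs
        rwa [hQpal] at this
      set P₁ := P.take (P.length - Q.length + Z.length) with hP₁
      have hP₁len : P₁.length = P.length - Q.length + Z.length := by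
        rw [hP₁, List.length_take]
        omega
      have hP₁lt : P₁.length < P.length := by omega
      have hP₁W : P₁ <+: W := (List.take_prefix _ _).trans hPW
      have hQdrop : P.drop (P.length - Q.length) = Q := suffix_drop hQP
      have hZrevsuf : Z.reverse <:+ P₁ := by
        have hd : P₁.drop (P.length - Q.length) = Z.reverse := by
          rw [hP₁, List.drop_take]
          have : P.length - Q.length + Z.length - (P.length - Q.length) = Z.length := by omega
          rw [this, hQdrop]
          have := (List.prefix_iff_eq_take.1 hZrev).symm
          simpa using this
        rw [← hd]
        exact List.drop_suffix _ _
      have hurevp : u <+: Z.reverse := by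
        have := List.reverse_prefix.2 huZs
        rwa [hupal] at this
      have hurevs : u <:+ Z.reverse := by
        have := List.reverse_suffix.2 huZp
        rwa [hupal] at this
      have hoccrev : occ u Z.reverse = 2 := by
        have := occ_reverse u Z
        rwa [hupal, hocc2] at this
      have hpalrev : Pal Z.reverse :=
        ih P₁.length (by omega) P₁ le_rfl hP₁W u Z.reverse hu hupal hZrevsuf hurevp hurevs hoccrev
      rw [Pal, List.reverse_reverse] at hpalrev
      rw [Pal, ← hpalrev]

/-- Final theorem -/
theorem stmt2' (W : List α) :
    Rich W ↔ ∀ u : List α, u ≠ [] → u <:+: W → Pal u →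
      ∀ Z : List α, CompleteReturn u Z W → Pal Z := by
  constructor
  · -- richness implies the complete return property
    intro hrich u hu _ hupal Z hZ
    obtain ⟨⟨s, t, hst⟩, huZp, huZs, hocc2⟩ := hZ
    have hPW : s ++ Z <+: W := ⟨t, by rw [← hst, List.append_assoc]⟩
    have hZP : Z <:+ s ++ Z := ⟨s, rfl⟩
    have H : ∀ P : List α, P <+: W → P ≠ [] → ∃ Q : List α, Q ≠ [] ∧ Q <:+ P ∧ Pal Q ∧
        (∀ R : List α, R <:+ P → Pal R → R.length ≤ Q.length) ∧ occ Q P = 1 := by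
      intro P hP hPne
      exact newPal_unioccurrent hPne (((rich_iff_newPal W).1 hrich) P hP hPne)
    exact main_induction W H (s ++ Z).length (s ++ Z) le_rfl hPW u Z hu hupal hZP huZp huZs hocc2
  · -- the complete return property implies richness
    intro hCRP
    rw [rich_iff_newPal]
    intro P hPW hPne
    obtain ⟨Q, hQne, hQP, hQpal, hQmax⟩ := exists_maxpal P hPne
    by_cases hcase : Q <:+: P.dropLast
    · exfalso
      obtain ⟨i₀, hi₀lt, hi₀⟩ := occ_of_infix_dropLast hPne hcase
      have hQ1 : 1 ≤ Q.length := List.length_pos_iff.2 hQne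
      have hQlen : Q.length ≤ P.length := hQP.length_le
      set p : ℕ → Prop := fun j => Q <+: P.drop j with hp
      haveI hdec : DecidablePred p := fun j => inferInstanceAs (Decidable (Q <+: P.drop j))
      set i := Nat.findGreatest p (P.length - Q.length - 1) with hi
      have hib : i₀ ≤ P.length - Q.length - 1 := by omega
      have hpi : p i := Nat.findGreatest_spec hib hi₀
      have hile : i ≤ P.length - Q.length - 1 := Nat.findGreatest_le _
      set Z := P.drop i with hZ
      have hZsuf : Z <:+ P := List.drop_suffix _ _
      have hZlen : Z.length = P.length - i := by rw [hZ, List.length_drop]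
      have hQZlen : Q.length < Z.length := by omega
      have hQZp : Q <+: Z := hpi
      have hQZs : Q <:+ Z := suffix_of_suffix_le hQP hZsuf (by omega)
      have hocc2 : occ Q Z = 2 := by
        apply occ_two_intro hQne hQZp hQZs hQZlen
        intro r hr
        have hdd : Z.drop r = P.drop (i + r) := by
          rw [hZ, List.drop_drop]
        rw [hdd] at hr
        have hjb := pocc_length hQne hr
        by_cases hend : i + r + Q.length = P.length
        · right; omega
        · left
          have : i + r ≤ P.length - Q.length - 1 := by omega
          have := Nat.le_findGreatest (P := p) this hr
          omega
      have hCR : CompleteReturn Q Z W := ⟨hZsuf.isInfix.trans hPW.isInfix, hQZp, hQZs, hocc2⟩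
      have hZpal : Pal Z := hCRP Q hQne (hQP.isInfix.trans hPW.isInfix) hQpal Z hCR
      have := hQmax Z hZsuf hZpal
      omega
    · exact ⟨Q, hQP, hQpal, hcase⟩


end RichAux

theorem stmt2 {α : Type*} [DecidableEq α] (W : List α) :
    Rich W ↔ ∀ u : List α, u ≠ [] → u <:+: W → Pal u →
      ∀ Z : List α, CompleteReturn u Z W → Pal Z := RichAux.stmt2' W
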